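/- Let F be a field of characteristic different from 2 and n ≥ 2. Let Q(n)^(+) denote the subspace of M_{2n}(F) consisting of matrices of the block form [[A, B], [B, A]] with A, B ∈ M_n(F), graded with even part the matrices [[A,0],[0,A]] and odd part the matrices [[0,B],[B,0]], and equipped with the super-symmetrized product: for x = x₀ + x₁ and y = y₀ + y₁ decomposed into even and odd parts, x∘y is bilinear with x₀∘y₀ = (1/2)(x₀y₀ + y₀x₀), x₀∘y₁ = (1/2)(x₀y₁ + y₁x₀), x₁∘y₀ = (1/2)(x₁y₀ + y₀x₁), and x₁∘y₁ = (1/2)(x₁y₁ − y₁x₁). Then every 1/2-derivation φ of Q(n)^(+) is of the form φ(x) = α·x for some α ∈ F. -/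

import Mathlib

/-- The even (block-diagonal) part of a matrix indexed by `α ⊕ β`. -/
def blockDiagPart {F : Type*} [Field F] {α β : Type*}
    (x : Matrix (α ⊕ β) (α ⊕ β) F) : Matrix (α ⊕ β) (α ⊕ β) F :=
  Matrix.of fun i j => if i.isLeft = j.isLeft then x i j else 0

/-- The super-symmetrized product `∘` on block matrices: writing
`x = x₀ + x₁` with `x₀` the block-diagonal (even) part and `x₁` the
block-off-diagonal (odd) part, `x ∘ y` is bilinear with
`x₀∘y₀ = (1/2)(x₀y₀ + y₀x₀)`, `x₀∘y₁ = (1/2)(x₀y₁ + y₁x₀)`,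
`x₁∘y₀ = (1/2)(x₁y₀ + y₀x₁)` and `x₁∘y₁ = (1/2)(x₁y₁ − y₁x₁)`. -/
def superMul {F : Type*} [Field F] {α β : Type*} [Fintype α] [Fintype β]
    (x y : Matrix (α ⊕ β) (α ⊕ β) F) : Matrix (α ⊕ β) (α ⊕ β) F :=
  (1 / 2 : F) •
    (blockDiagPart x * blockDiagPart y + blockDiagPart y * blockDiagPart x
      + blockDiagPart x * (y - blockDiagPart y) + (y - blockDiagPart y) * blockDiagPart x
      + (x - blockDiagPart x) * blockDiagPart y + blockDiagPart y * (x - blockDiagPart x)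
      + (x - blockDiagPart x) * (y - blockDiagPart y)
      - (y - blockDiagPart y) * (x - blockDiagPart x))

/-- The subspace `Q(n)` of `M_{2n}(F)`: block matrices `[[A, B], [B, A]]`. -/
def QnSub (F : Type*) [Field F] (n : ℕ) :
    Submodule F (Matrix (Fin n ⊕ Fin n) (Fin n ⊕ Fin n) F) where
  carrier := {x | (∀ i j : Fin n, x (Sum.inl i) (Sum.inl j) = x (Sum.inr i) (Sum.inr j))
    ∧ ∀ i j : Fin n, x (Sum.inl i) (Sum.inr j) = x (Sum.inr i) (Sum.inl j)}
  add_mem' := by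
    rintro a b ⟨ha1, ha2⟩ ⟨hb1, hb2⟩
    exact ⟨fun i j => by simp [Matrix.add_apply, ha1 i j, hb1 i j],
      fun i j => by simp [Matrix.add_apply, ha2 i j, hb2 i j]⟩
  zero_mem' := ⟨fun i j => rfl, fun i j => rfl⟩
  smul_mem' := by
    rintro c x ⟨h1, h2⟩
    exact ⟨fun i j => by simp [Matrix.smul_apply, h1 i j],
      fun i j => by simp [Matrix.smul_apply, h2 i j]⟩

namespace QnAux

variable {F : Type*} [Field F] {n : ℕ}

abbrev M1 (F : Type*) [Field F] (n : ℕ) := Matrix (Fin n) (Fin n) F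

def Ev (X : M1 F n) : Matrix (Fin n ⊕ Fin n) (Fin n ⊕ Fin n) F :=
  Matrix.fromBlocks X 0 0 X

def Od (X : M1 F n) : Matrix (Fin n ⊕ Fin n) (Fin n ⊕ Fin n) F :=
  Matrix.fromBlocks 0 X X 0

theorem bd_fromBlocks (A B C D : M1 F n) :
    blockDiagPart (Matrix.fromBlocks A B C D) = Matrix.fromBlocks A 0 0 D := by
  ext (i | i) (j | j) <;> simp [blockDiagPart]

theorem bd_Ev (X : M1 F n) : blockDiagPart (Ev X) = Ev X := by
  simp [Ev, bd_fromBlocks]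

theorem bd_Od (X : M1 F n) : blockDiagPart (Od X) = 0 := by
  simp [Od, bd_fromBlocks]

theorem Ev_mul_Ev (X Y : M1 F n) : Ev X * Ev Y = Ev (X * Y) := by
  simp [Ev, Matrix.fromBlocks_multiply]

theorem Od_mul_Od (X Y : M1 F n) : Od X * Od Y = Ev (X * Y) := by
  simp [Ev, Od, Matrix.fromBlocks_multiply]

theorem Ev_mul_Od (X Y : M1 F n) : Ev X * Od Y = Od (X * Y) := by
  simp [Ev, Od, Matrix.fromBlocks_multiply]

theorem Od_mul_Ev (X Y : M1 F n) : Od X * Ev Y = Od (X * Y) := by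
  simp [Ev, Od, Matrix.fromBlocks_multiply]

theorem Ev_add (X Y : M1 F n) : Ev (X + Y) = Ev X + Ev Y := by
  simp [Ev, Matrix.fromBlocks_add]

theorem Od_add (X Y : M1 F n) : Od (X + Y) = Od X + Od Y := by
  simp [Od, Matrix.fromBlocks_add]

theorem Ev_smul (c : F) (X : M1 F n) : Ev (c • X) = c • Ev X := by
  simp [Ev, Matrix.fromBlocks_smul]

theorem Od_smul (c : F) (X : M1 F n) : Od (c • X) = c • Od X := by
  simp [Od, Matrix.fromBlocks_smul]

theorem Ev_sub (X Y : M1 F n) : Ev (X - Y) = Ev X - Ev Y := by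
  ext (i | i) (j | j) <;> simp [Ev]

theorem Ev_zero : Ev (0 : M1 F n) = 0 := by
  ext (i | i) (j | j) <;> simp [Ev]

theorem Od_zero : Od (0 : M1 F n) = 0 := by
  ext (i | i) (j | j) <;> simp [Od]

theorem Ev_one : Ev (1 : M1 F n) = 1 := by
  simp [Ev, Matrix.fromBlocks_one]

theorem sm_Ev_Ev (X Y : M1 F n) :
    superMul (Ev X) (Ev Y) = Ev ((1 / 2 : F) • (X * Y + Y * X)) := by
  rw [superMul, bd_Ev, bd_Ev]
  simp [Ev_mul_Ev, ← Ev_add, ← Ev_smul]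

theorem sm_Od_Od (X Y : M1 F n) :
    superMul (Od X) (Od Y) = Ev ((1 / 2 : F) • (X * Y - Y * X)) := by
  rw [superMul, bd_Od, bd_Od]
  simp [Od_mul_Od]
  rw [Ev_smul, Ev_sub, smul_sub]


theorem sm_Ev_Od (X Y : M1 F n) :
    superMul (Ev X) (Od Y) = Od ((1 / 2 : F) • (X * Y + Y * X)) := by
  rw [superMul, bd_Ev, bd_Od]
  simp [Ev_mul_Od, Od_mul_Ev, ← Od_add, ← Od_smul]

theorem sm_Od_Ev (X Y : M1 F n) :
    superMul (Od X) (Ev Y) = Od ((1 / 2 : F) • (X * Y + Y * X)) := by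
  rw [superMul, bd_Od, bd_Ev]
  simp [Ev_mul_Od, Od_mul_Ev, ← Od_add, ← Od_smul, add_comm]

theorem bd_add (x y : Matrix (Fin n ⊕ Fin n) (Fin n ⊕ Fin n) F) :
    blockDiagPart (x + y) = blockDiagPart x + blockDiagPart y := by
  ext i j
  simp [blockDiagPart, Matrix.add_apply]
  split <;> simp

theorem bd_smul (c : F) (x : Matrix (Fin n ⊕ Fin n) (Fin n ⊕ Fin n) F) :
    blockDiagPart (c • x) = c • blockDiagPart x := by
  ext i j
  simp [blockDiagPart, Matrix.smul_apply]

theorem bd_one : blockDiagPart (1 : Matrix (Fin n ⊕ Fin n) (Fin n ⊕ Fin n) F) = 1 := by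
  ext i j
  by_cases h : i = j <;> simp [blockDiagPart, Matrix.one_apply, h]

theorem sm_add_left (x x' y : Matrix (Fin n ⊕ Fin n) (Fin n ⊕ Fin n) F) :
    superMul (x + x') y = superMul x y + superMul x' y := by
  rw [superMul, superMul, superMul, bd_add, ← smul_add]
  congr 1
  noncomm_ring

theorem sm_add_right (x y y' : Matrix (Fin n ⊕ Fin n) (Fin n ⊕ Fin n) F) :
    superMul x (y + y') = superMul x y + superMul x y' := by
  rw [superMul, superMul, superMul, bd_add, ← smul_add]
  congr 1
  noncomm_ring

theorem sm_smul_right (c : F) (x y : Matrix (Fin n ⊕ Fin n) (Fin n ⊕ Fin n) F) :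
    superMul x (c • y) = c • superMul x y := by
  rw [superMul, superMul, bd_smul, smul_comm]
  congr 1
  rw [← smul_sub c y (blockDiagPart y)]
  simp only [mul_smul_comm, smul_mul_assoc, ← smul_add, ← smul_sub]

theorem sm_one_right (hchar : (2 : F) ≠ 0) (x : Matrix (Fin n ⊕ Fin n) (Fin n ⊕ Fin n) F) :
    superMul x 1 = x := by
  rw [superMul, bd_one]
  simp only [sub_self, mul_one, one_mul, mul_zero, zero_mul, add_zero, sub_zero]
  rw [show blockDiagPart x + blockDiagPart x + (x - blockDiagPart x) + (x - blockDiagPart x)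
      = (2 : F) • x by rw [two_smul]; abel]
  rw [smul_smul, one_div, inv_mul_cancel₀ hchar, one_smul]

theorem sm_one_left (hchar : (2 : F) ≠ 0) (x : Matrix (Fin n ⊕ Fin n) (Fin n ⊕ Fin n) F) :
    superMul 1 x = x := by
  rw [superMul, bd_one]
  simp only [sub_self, mul_one, one_mul, mul_zero, zero_mul, add_zero, zero_add, sub_zero, zero_sub]
  rw [show blockDiagPart x + blockDiagPart x + (x - blockDiagPart x) + (x - blockDiagPart x)
      = (2 : F) • x by rw [two_smul]; abel]
  rw [smul_smul, one_div, inv_mul_cancel₀ hchar, one_smul]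



def UL (m : Matrix (Fin n ⊕ Fin n) (Fin n ⊕ Fin n) F) : M1 F n :=
  Matrix.of fun i j => m (Sum.inl i) (Sum.inl j)

def UR (m : Matrix (Fin n ⊕ Fin n) (Fin n ⊕ Fin n) F) : M1 F n :=
  Matrix.of fun i j => m (Sum.inl i) (Sum.inr j)

@[simp] theorem UL_Ev (P : M1 F n) : UL (Ev P) = P := by ext i j; simp [UL, Ev]
@[simp] theorem UL_Od (Q : M1 F n) : UL (Od Q) = 0 := by ext i j; simp [UL, Od]
@[simp] theorem UR_Ev (P : M1 F n) : UR (Ev P) = 0 := by ext i j; simp [UR, Ev]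
@[simp] theorem UR_Od (Q : M1 F n) : UR (Od Q) = Q := by ext i j; simp [UR, Od]
@[simp] theorem UL_add (m m' : Matrix (Fin n ⊕ Fin n) (Fin n ⊕ Fin n) F) :
    UL (m + m') = UL m + UL m' := by ext i j; simp [UL, Matrix.add_apply]
@[simp] theorem UR_add (m m' : Matrix (Fin n ⊕ Fin n) (Fin n ⊕ Fin n) F) :
    UR (m + m') = UR m + UR m' := by ext i j; simp [UR, Matrix.add_apply]
@[simp] theorem UL_smul (c : F) (m : Matrix (Fin n ⊕ Fin n) (Fin n ⊕ Fin n) F) :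
    UL (c • m) = c • UL m := by ext i j; simp [UL, Matrix.smul_apply]
@[simp] theorem UR_smul (c : F) (m : Matrix (Fin n ⊕ Fin n) (Fin n ⊕ Fin n) F) :
    UR (c • m) = c • UR m := by ext i j; simp [UR, Matrix.smul_apply]

theorem evMem (X : M1 F n) : Ev X ∈ QnSub F n :=
  ⟨fun i j => by simp [Ev], fun i j => by simp [Ev]⟩

theorem odMem (X : M1 F n) : Od X ∈ QnSub F n :=
  ⟨fun i j => by simp [Od], fun i j => by simp [Od]⟩

theorem oneMem : (1 : Matrix (Fin n ⊕ Fin n) (Fin n ⊕ Fin n) F) ∈ QnSub F n := by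
  rw [← Ev_one]; exact evMem 1

theorem decomp {x : Matrix (Fin n ⊕ Fin n) (Fin n ⊕ Fin n) F} (hx : x ∈ QnSub F n) :
    x = Ev (UL x) + Od (UR x) := by
  obtain ⟨h1, h2⟩ := hx
  ext (i | i) (j | j)
  · simp [Ev, Od, UL, Matrix.add_apply]
  · simp [Ev, Od, UR, Matrix.add_apply]
  · simp [Ev, Od, UR, Matrix.add_apply]; exact (h2 i j).symm
  · simp [Ev, Od, UL, Matrix.add_apply]; exact (h1 i j).symm



theorem cancel_half {V : Type*} [AddCommGroup V] [Module F V] (hchar : (2:F) ≠ 0)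
    (v w : V) (h : v = (1/2:F) • (v + w)) : v = w := by
  have h2 := congrArg (fun m => (2:F) • m) h
  simp only [smul_smul, mul_one_div, div_self hchar, one_smul, two_smul] at h2
  exact add_left_cancel h2

theorem half_add {V : Type*} [AddCommGroup V] [Module F V] (hchar : (2:F) ≠ 0)
    (m : V) : (1/2:F) • m + (1/2:F) • m = m := by
  rw [← add_smul, ← add_div, one_add_one_eq_two, div_self hchar, one_smul]

theorem half_two {V : Type*} [AddCommGroup V] [Module F V] (hchar : (2:F) ≠ 0)
    (m : V) : (1/2:F) • (m + m) = m := by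
  rw [smul_add, half_add hchar]

end QnAux

open QnAux


/-- **1/2-derivations of the Jordan superalgebra `Q(n)⁺`.**
Let `F` be a field of characteristic not `2` and `n ≥ 2`.  Every
`1/2`-derivation `φ` of `Q(n)⁺` (the space of block matrices
`[[A, B], [B, A]]` with the super-symmetrized product `∘`) is of the form
`φ x = α • x` for some `α ∈ F`.  (The `1/2`-derivation property is stated
via representatives: whenever `z ∈ Q(n)` equals `x ∘ y` as a matrix,
`φ z = (1/2) • (φ x ∘ y + x ∘ φ y)`.) -/
theorem half_derivation_of_Qn_plus
    {F : Type*} [Field F] (hchar : (2 : F) ≠ 0) (n : ℕ) (hn : 2 ≤ n)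
    (φ : QnSub F n →ₗ[F] QnSub F n)
    (hφ : ∀ x y z : QnSub F n,
      (z : Matrix (Fin n ⊕ Fin n) (Fin n ⊕ Fin n) F)
          = superMul (x : Matrix (Fin n ⊕ Fin n) (Fin n ⊕ Fin n) F) (y : Matrix (Fin n ⊕ Fin n) (Fin n ⊕ Fin n) F) →
      (φ z : Matrix (Fin n ⊕ Fin n) (Fin n ⊕ Fin n) F)
        = (1 / 2 : F) • (superMul (φ x : Matrix (Fin n ⊕ Fin n) (Fin n ⊕ Fin n) F)
              (y : Matrix (Fin n ⊕ Fin n) (Fin n ⊕ Fin n) F)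
            + superMul (x : Matrix (Fin n ⊕ Fin n) (Fin n ⊕ Fin n) F)
              (φ y : Matrix (Fin n ⊕ Fin n) (Fin n ⊕ Fin n) F))) :
    ∃ α : F, ∀ x : QnSub F n, φ x = α • x := by
  classical
  have half_ne : (1/2 : F) ≠ 0 := one_div_ne_zero hchar
  let e : QnSub F n := ⟨1, oneMem⟩
  have hcoe_e : (e : Matrix (Fin n ⊕ Fin n) (Fin n ⊕ Fin n) F) = 1 := rfl
  set d : Matrix (Fin n ⊕ Fin n) (Fin n ⊕ Fin n) F := (φ e : Matrix (Fin n ⊕ Fin n) (Fin n ⊕ Fin n) F) with hd_def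
  have hre : ∀ x : QnSub F n,
      (φ x : Matrix (Fin n ⊕ Fin n) (Fin n ⊕ Fin n) F)
        = superMul (x : Matrix (Fin n ⊕ Fin n) (Fin n ⊕ Fin n) F) d := by
    intro x
    have h := hφ x e x (by rw [hcoe_e, sm_one_right hchar])
    rw [hcoe_e, sm_one_right hchar] at h
    exact cancel_half hchar _ _ h
  have hle : ∀ x : QnSub F n,
      (φ x : Matrix (Fin n ⊕ Fin n) (Fin n ⊕ Fin n) F)
        = superMul d (x : Matrix (Fin n ⊕ Fin n) (Fin n ⊕ Fin n) F) := by
    intro x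
    have h := hφ e x x (by rw [hcoe_e, sm_one_left hchar])
    rw [hcoe_e, sm_one_left hchar, add_comm] at h
    exact cancel_half hchar _ _ h
  set A : M1 F n := UL d with hA_def
  set B : M1 F n := UR d with hB_def
  have hdEq : d = Ev A + Od B := decomp (φ e).2
  -- Step 1 : B commutes with everything
  have hBcomm : ∀ C : M1 F n, B * C = C * B := by
    intro C
    have h1 := (hre ⟨Od C, odMem C⟩).symm.trans (hle ⟨Od C, odMem C⟩)
    simp only [Submodule.coe_mk] at h1
    rw [hdEq, sm_add_left, sm_add_right, sm_Od_Ev, sm_Od_Od, sm_Ev_Od, sm_Od_Od] at h1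
    have h2 := congrArg UL h1
    simp only [UL_add, UL_Ev, UL_Od, zero_add] at h2
    have h3 := smul_right_injective (M1 F n) half_ne h2
    -- h3 : C*B - B*C = B*C - C*B
    have h4 : -(B * C - C * B) = B * C - C * B := by rw [neg_sub]; exact h3
    have h5 : (2:F) • (B * C - C * B) = 0 := by
      rw [two_smul]
      nth_rewrite 1 [← h4]
      rw [neg_add_cancel]
    rcases smul_eq_zero.mp h5 with h | h
    · exact absurd h hchar
    · exact sub_eq_zero.mp h
  -- Step 2 : the Jordan identity for A
  have hA : ∀ X : M1 F n,
      A * (X * X) + X * (X * A) = X * (A * X) + X * (A * X) := by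
    intro X
    have h := hφ ⟨Ev X, evMem X⟩ ⟨Ev X, evMem X⟩
      ⟨superMul (Ev X) (Ev X), by rw [sm_Ev_Ev]; exact evMem _⟩ rfl
    simp only [hle, Submodule.coe_mk] at h
    rw [hdEq] at h
    simp only [sm_Ev_Ev, sm_add_left, sm_add_right, sm_Ev_Od, sm_Od_Ev, sm_Od_Od] at h
    have h2 := congrArg UL h
    simp only [UL_add, UL_Ev, UL_Od, UL_smul, zero_add, add_zero, smul_zero] at h2
    have h3 := smul_right_injective (M1 F n) half_ne h2
    rw [half_two hchar (X * X)] at h3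
    rw [add_comm (X * ((1/2:F) • (A * X + X * A))) (((1/2:F) • (A * X + X * A)) * X)] at h3
    rw [half_add hchar] at h3
    rw [Matrix.smul_mul, Matrix.mul_smul, ← smul_add] at h3
    rw [add_mul, mul_add] at h3
    simp only [mul_assoc] at h3
    have h4 : A * (X * X) + X * (X * A)
        = (1/2:F) • ((A * (X * X) + X * (X * A)) + (X * (A * X) + X * (A * X))) :=
      h3.trans (by congr 1; abel)
    exact cancel_half hchar _ _ h4
  -- A has zero off-diagonal entries
  have hAoff : ∀ k l : Fin n, k ≠ l → A k l = 0 := by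
    intro k l hkl
    have h2 := Matrix.ext_iff.mpr (hA (Matrix.single l l 1)) k l
    simpa [Matrix.add_apply, hkl] using h2
  -- A has constant diagonal
  have hAdiag : ∀ k l : Fin n, k ≠ l → A k k = A l l := by
    intro k l hkl
    have h2 := Matrix.ext_iff.mpr
      (hA (Matrix.single k l 1 + Matrix.single l k 1)) k k
    simp [Matrix.add_mul, Matrix.mul_add, Matrix.add_apply, hkl, hkl.symm] at h2
    have h3 : (2:F) * A k k = (2:F) * A l l := by rw [two_mul, two_mul]; exact h2
    exact mul_left_cancel₀ hchar h3
  have hn0 : 0 < n := by omega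
  have hn1 : 1 < n := by omega
  let i0 : Fin n := ⟨0, hn0⟩
  let i1 : Fin n := ⟨1, hn1⟩
  have hne : i0 ≠ i1 := by simp [i0, i1, Fin.ext_iff]
  -- A is scalar
  have hAscalar : A = A i0 i0 • (1 : M1 F n) := by
    ext k l
    by_cases hkl : k = l
    · subst hkl
      by_cases hk : k = i0
      · subst hk; simp [Matrix.one_apply]
      · simp [Matrix.one_apply, hAdiag k i0 hk]
    · simp [Matrix.one_apply, hkl, hAoff k l hkl]
  -- B is scalar
  obtain ⟨β, hβ⟩ := Matrix.mem_range_scalar_of_commute_single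
    (M := B) (fun i j _ => (hBcomm _).symm)
  have hβ' : B = β • (1 : M1 F n) := by
    rw [← hβ]; ext k l
    simp [Matrix.scalar_apply, Matrix.one_apply, Matrix.diagonal_apply]
  -- β = 0
  have hβ0 : β = 0 := by
    set X : M1 F n := Matrix.single i0 i1 1 with hX_def
    set Y : M1 F n := Matrix.single i1 i0 1 with hY_def
    have h := hφ ⟨Od X, odMem X⟩ ⟨Od Y, odMem Y⟩
      ⟨superMul (Od X) (Od Y), by rw [sm_Od_Od]; exact evMem _⟩ rfl
    simp only [hle, Submodule.coe_mk] at h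
    rw [hdEq] at h
    simp only [sm_Od_Od, sm_add_left, sm_add_right, sm_Ev_Ev, sm_Ev_Od, sm_Od_Ev] at h
    have hBX : B * X - X * B = 0 := by rw [hBcomm]; exact sub_self _
    have hBY : B * Y - Y * B = 0 := by rw [hBcomm]; exact sub_self _
    have h2 := congrArg UR h
    simp only [UR_add, UR_Ev, UR_Od, UR_smul, zero_add, add_zero, smul_zero,
      hBX, hBY, Matrix.zero_mul, Matrix.mul_zero] at h2
    -- h2 : (1/2) • (B * S + S * B) = 0
    have h3 : B * ((1/2:F) • (X * Y - Y * X)) + ((1/2:F) • (X * Y - Y * X)) * B = 0 := by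
      have := smul_right_injective (M1 F n) half_ne (h2.trans (smul_zero (1/2:F)).symm)
      exact this
    rw [hβ'] at h3
    have h4 := Matrix.ext_iff.mpr h3 i0 i0
    simp [Matrix.add_apply, Matrix.smul_apply, Matrix.mul_apply, Matrix.one_apply,
      Matrix.sub_apply, hne, hne.symm, X, Y] at h4
    -- reduce to β = 0
    field_simp at h4
    have h5 : (2:F) * β = 0 := by rw [two_mul]; linear_combination h4
    exact (mul_eq_zero.mp h5).resolve_left hchar
  -- conclude
  have hd1 : d = (A i0 i0) • (1 : Matrix (Fin n ⊕ Fin n) (Fin n ⊕ Fin n) F) := by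
    rw [hdEq, hAscalar, hβ', hβ0]
    simp [Ev_smul, Od_smul, Ev_one, Od_zero]
  refine ⟨A i0 i0, fun x => ?_⟩
  refine Subtype.coe_injective ?_
  show (φ x : Matrix (Fin n ⊕ Fin n) (Fin n ⊕ Fin n) F)
      = ((A i0 i0 • x : QnSub F n) : Matrix (Fin n ⊕ Fin n) (Fin n ⊕ Fin n) F)
  rw [hre x, hd1, sm_smul_right, sm_one_right hchar]
  simp
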